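/- Assume all parameters are positive, δ = δ₀, and c₁ = (b+γ) + (s_M/μ_M)(N₃ β + η) − δ₀ > 0. Then 0 is an eigenvalue of the Jacobian matrix J of the in-host TB system at the infection-free steady state (a zero-eigenvalue bifurcation occurs), and the remaining three eigenvalues are the negative real numbers −μ_M, −μ_T, and −c₁. -/

import Mathlib

open Matrix

/-- If δ = δ₀ and c₁ > 0, then 0 is an eigenvalue of the Jacobian J at
the infection-free steady state (zero-eigenvalue bifurcation), and the remaining
three eigenvalues are the negative reals −μ_M, −μ_T and −c₁. -/
theorem zero_eigenvalue_bifurcation_at_threshold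
    (sM μM β b γ δ N₁ N₂ N₃ η sT cM eM cB eB μT : ℝ)
    (hsM : 0 < sM) (hμM : 0 < μM) (hβ : 0 < β) (hb : 0 < b) (hγ : 0 < γ)
    (hδ : 0 < δ) (hN₁ : 0 < N₁) (hN₂ : 0 < N₂) (hN₃ : 0 < N₃) (hη : 0 < η)
    (hsT : 0 < sT) (hcM : 0 < cM) (heM : 0 < eM) (hcB : 0 < cB) (heB : 0 < eB)
    (hμT : 0 < μT)
    (Tbar : ℝ) (hTbar : Tbar = sT / μT)
    (J : Matrix (Fin 4) (Fin 4) ℝ)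
    (hJ : J = !![-μM, 0, -β * sM / μM, 0;
                 0, -(b + γ), β * sM / μM, 0;
                 0, N₁ * b + N₂ * γ, δ - (sM / μM) * (η + N₃ * β), 0;
                 0, cM * Tbar / (eM * Tbar + 1), cB * Tbar / (eB * Tbar + 1), -μT])
    (c₁ δ₀ : ℝ)
    (hc₁ : c₁ = (b + γ) + (sM / μM) * (N₃ * β + η) - δ)
    (hδ₀ : δ₀ = (sM / μM) * (η - β * ((N₂ - N₃) * γ + (N₁ - N₃) * b) / (b + γ)))
    (hthr : δ = δ₀) (hc₁pos : 0 < c₁) :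
    (0 : ℝ) ∈ spectrum ℝ J ∧
    spectrum ℝ J = {0, -μM, -μT, -c₁} ∧
    -μM < 0 ∧ -μT < 0 ∧ -c₁ < 0 := by
  have hbγ : (b + γ) ≠ 0 := by positivity
  have hμM' : μM ≠ 0 := hμM.ne'
  have hdet : ∀ x : ℝ, (x • (1 : Matrix (Fin 4) (Fin 4) ℝ) - J).det
      = (x + μM) * (x + μT) * x * (x + c₁) := by
    intro x
    subst hJ hδ₀ hthr hc₁
    rw [Matrix.det_succ_row_zero]
    simp [Fin.sum_univ_succ, Matrix.det_fin_three, Matrix.submatrix_apply,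
      Matrix.sub_apply, Matrix.smul_apply, Matrix.one_apply]
    field_simp
    ring
  have hmem : ∀ x : ℝ, x ∈ spectrum ℝ J ↔
      (x + μM) * (x + μT) * x * (x + c₁) = 0 := by
    intro x
    rw [spectrum.mem_iff, Algebra.algebraMap_eq_smul_one,
      Matrix.isUnit_iff_isUnit_det, isUnit_iff_ne_zero, not_ne_iff, hdet]
  have hset : spectrum ℝ J = {0, -μM, -μT, -c₁} := by
    ext x
    rw [hmem]
    simp only [Set.mem_insert_iff, Set.mem_singleton_iff, mul_eq_zero]
    constructor
    · rintro (((h | h) | h) | h)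
      · right; left; linarith
      · right; right; left; linarith
      · left; exact h
      · right; right; right; linarith
    · rintro (h | h | h | h) <;> subst h
      · simp
      · left; left; left; ring
      · left; left; right; ring
      · right; ring
  refine ⟨?_, hset, by linarith, by linarith, by linarith⟩
  rw [hset]; simp
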